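/- Let E be a directed graph and let H = {v ∈ E^0 : every circuit of E all of whose vertices lie in V(v) is either terminal or transitory, and every infinite path λ of E all of whose vertices lie in V(v) has N_λ finite}. Then H is a hereditary and saturated subset of E^0. -/

import Mathlib

namespace CKGraph

variable {V E : Type*}

/-- One-step relation: there is an edge from `v` to `w`. -/
def Step (o t : E → V) (v w : V) : Prop := ∃ e, o e = v ∧ t e = w

/-- `Reach o t v w` means `v ≥ w`: there is a (possibly trivial) directed path
from `v` to `w`. -/
def Reach (o t : E → V) (v w : V) : Prop := Relation.ReflTransGen (Step o t) v w

/-- A finite path: consecutive edges are composable. -/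
def IsPath (o t : E → V) (p : List E) : Prop := List.Chain' (fun e f => t e = o f) p

/-- An infinite path. -/
def IsInfPath (o t : E → V) (p : ℕ → E) : Prop := ∀ n, t (p n) = o (p (n + 1))

/-- Tail-equivalence of infinite paths: they eventually share the same tail. -/
def InfEquiv (p q : ℕ → E) : Prop := ∃ j k : ℕ, ∀ r : ℕ, p (j + r) = q (k + r)

/-- The set of vertices occurring in a finite path. -/
def FinPathVerts (o t : E → V) (p : List E) : Set V := {v | ∃ e ∈ p, o e = v ∨ t e = v}

/-- The set of vertices occurring in an infinite path. -/
def InfPathVerts (o t : E → V) (p : ℕ → E) : Set V := {v | ∃ n, o (p n) = v}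

/-- Every vertex emits at most finitely many edges. -/
def RowFinite (o : E → V) : Prop := ∀ v : V, {e : E | o e = v}.Finite

/-- Every vertex emits at least one edge. -/
def NoSinks (o : E → V) : Prop := ∀ v : V, ∃ e : E, o e = v

/-- Condition (M): for every vertex `v` and every infinite path `l`, only finitely
many infinite paths begin at `v` and are equivalent to `l`. -/
def CondM (o t : E → V) : Prop :=
  ∀ (v : V) (l : ℕ → E), IsInfPath o t l →
    {p : ℕ → E | IsInfPath o t p ∧ o (p 0) = v ∧ InfEquiv p l}.Finite

/-- A circuit: a finite path of positive length whose origin and terminus agree. -/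
def IsCircuit (o t : E → V) (p : List E) : Prop :=
  IsPath o t p ∧ ∃ h : p ≠ [], o (p.head h) = t (p.getLast h)

/-- An exit of a circuit: an edge not on the circuit whose origin is a vertex of
the circuit. -/
def IsExit (o t : E → V) (p : List E) (e : E) : Prop :=
  e ∉ p ∧ o e ∈ FinPathVerts o t p

/-- A terminal circuit: a circuit with no exit. -/
def TerminalCircuit (o t : E → V) (p : List E) : Prop :=
  IsCircuit o t p ∧ ∀ e : E, ¬ IsExit o t p e

/-- A transitory circuit: a circuit with an exit, none of whose exits gets back
to the circuit. -/
def TransitoryCircuit (o t : E → V) (p : List E) : Prop :=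
  IsCircuit o t p ∧ (∃ e : E, IsExit o t p e) ∧
    ∀ e : E, IsExit o t p e → ∀ w ∈ FinPathVerts o t p, ¬ Reach o t (t e) w

/-- The set of vertices of the infinite path `l` that emit multiple edges
returning to `l`; its cardinality is `N_l`. -/
def ReturnVerts (o t : E → V) (l : ℕ → E) : Set V :=
  {v | v ∈ InfPathVerts o t l ∧ ∃ e f : E, e ≠ f ∧ o e = v ∧ o f = v ∧
    (∃ w ∈ InfPathVerts o t l, Reach o t (t e) w) ∧
    (∃ w ∈ InfPathVerts o t l, Reach o t (t f) w)}

/-- A maximal tail. -/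
def MaximalTail (o t : E → V) (γ : Set V) : Prop :=
  γ.Nonempty ∧
  (∀ v₁ ∈ γ, ∀ v₂ ∈ γ, ∃ z ∈ γ, Reach o t v₁ z ∧ Reach o t v₂ z) ∧
  (∀ v ∈ γ, ∃ e : E, o e = v ∧ t e ∈ γ) ∧
  (∀ v w : V, Reach o t v w → w ∈ γ → v ∈ γ)

/-- The edge set of the induced subgraph `Graph(γ)`. -/
def edgesIn (o t : E → V) (γ : Set V) : Set E := {e | o e ∈ γ ∧ t e ∈ γ}

/-- One-step relation in the subgraph with edge set `S`. -/
def StepIn (o t : E → V) (S : Set E) (v w : V) : Prop := ∃ e ∈ S, o e = v ∧ t e = w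

/-- Reachability inside the subgraph with edge set `S`. -/
def ReachIn (o t : E → V) (S : Set E) (v w : V) : Prop :=
  Relation.ReflTransGen (StepIn o t S) v w

/-- `H` is saturated in the subgraph with vertex set `V0` and edge set `E0`:
every non-singular vertex of the subgraph all of whose successors lie in `H`
belongs to `H`. -/
def SaturatedIn (o t : E → V) (V0 : Set V) (E0 : Set E) (H : Set V) : Prop :=
  ∀ v ∈ V0, (∃ e ∈ E0, o e = v) → {e ∈ E0 | o e = v}.Finite →
    (∀ e ∈ E0, o e = v → t e ∈ H) → v ∈ H

/-- The saturation of `S` in the subgraph `(V0, E0)`: the smallest subset of `V0`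
containing `S` which is saturated in the subgraph. -/
def saturationIn (o t : E → V) (V0 : Set V) (E0 : Set E) (S : Set V) : Set V :=
  ⋂₀ {H : Set V | S ⊆ H ∧ H ⊆ V0 ∧ SaturatedIn o t V0 E0 H}

/-- A hereditary subset of vertices. -/
def Hereditary (o t : E → V) (H : Set V) : Prop :=
  ∀ v ∈ H, ∀ w : V, Reach o t v w → w ∈ H

/-- A singular vertex: a sink or an infinite emitter. -/
def Singular (o : E → V) (v : V) : Prop :=
  (¬ ∃ e : E, o e = v) ∨ {e : E | o e = v}.Infinite

/-- A saturated subset of vertices: every non-singular vertex all of whose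
successors lie in `H` belongs to `H`. -/
def Saturated (o t : E → V) (H : Set V) : Prop :=
  ∀ v : V, ¬ Singular o v → (∀ e : E, o e = v → t e ∈ H) → v ∈ H

/-- The saturation of `S`: the smallest saturated set containing `S`. -/
def saturation (o t : E → V) (S : Set V) : Set V :=
  ⋂₀ {H : Set V | S ⊆ H ∧ Saturated o t H}


/-- The condition defining `H`: every circuit of `E` all of whose vertices lie in
`V(v)` is terminal or transitory, and every infinite path of `E` all of whose
vertices lie in `V(v)` has finitely many vertices emitting multiple edges
returning to it. -/
def TypeIAt (o t : E → V) (v : V) : Prop :=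
  (∀ p : List E, IsCircuit o t p → FinPathVerts o t p ⊆ {w : V | Reach o t v w} →
    TerminalCircuit o t p ∨ TransitoryCircuit o t p) ∧
  (∀ l : ℕ → E, IsInfPath o t l → InfPathVerts o t l ⊆ {w : V | Reach o t v w} →
    (ReturnVerts o t l).Finite)

private lemma reach_inf (o t : E → V) {l : ℕ → E} (h : IsInfPath o t l)
    {n m : ℕ} (hnm : n ≤ m) : Reach o t (o (l n)) (o (l m)) := by
  induction hnm with
  | refl => exact Relation.ReflTransGen.refl
  | step _ ih =>
    exact Relation.ReflTransGen.tail ih ⟨l _, rfl, h _⟩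

private lemma return_to_tail (o t : E → V) {l : ℕ → E} (hl : IsInfPath o t l) (n : ℕ)
    {x : V} (h : ∃ w ∈ InfPathVerts o t l, Reach o t x w) :
    ∃ w ∈ InfPathVerts o t (fun k => l (n + k)), Reach o t x w := by
  obtain ⟨w, ⟨j, hj⟩, hr⟩ := h
  refine ⟨o (l (n + j)), ⟨j, rfl⟩, hr.trans ?_⟩
  rw [← hj]
  exact reach_inf o t hl (Nat.le_add_left j n)

private lemma circuit_facts (o t : E → V) {p : List E} (hc : IsCircuit o t p) :
    ∃ c : ℕ → E, IsInfPath o t c ∧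
      (∀ w ∈ FinPathVerts o t p, ∃ n, o (c n) = w) ∧
      (∀ n, o (c n) ∈ FinPathVerts o t p) ∧
      (∀ w₁ ∈ FinPathVerts o t p, ∀ w₂ ∈ FinPathVerts o t p, Reach o t w₁ w₂) := by
  obtain ⟨hpath, hne, hcl⟩ := hc
  have hL : 0 < p.length := List.length_pos_iff.mpr hne
  set L := p.length with hLdef
  set c : ℕ → E := fun n => p.get ⟨n % L, Nat.mod_lt n hL⟩ with hcdef
  have hget : ∀ (i : ℕ) (h : i < L), c i = p.get ⟨i, h⟩ := by
    intro i h
    simp only [hcdef]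
    congr 1
    exact Fin.ext (Nat.mod_eq_of_lt h)
  have hinf : IsInfPath o t c := by
    intro n
    have hq : L * (n / L) + n % L = n := Nat.div_add_mod n L
    have hmlt : n % L < L := Nat.mod_lt n hL
    by_cases hlast : n % L = L - 1
    · have h1 : (n + 1) % L = 0 := by
        have h2 : n + 1 = L * (n / L + 1) := by rw [Nat.mul_add, Nat.mul_one]; omega
        rw [h2, Nat.mul_mod_right]
      have h3 : c n = p.get ⟨L - 1, by omega⟩ := by
        simp only [hcdef]; congr 1; exact Fin.ext hlast
      have h4 : c (n + 1) = p.get ⟨0, by omega⟩ := by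
        simp only [hcdef]; congr 1; exact Fin.ext h1
      rw [h3, h4]
      have h5 : p.get ⟨L - 1, by omega⟩ = p.getLast hne := by
        simp only [List.get_eq_getElem]
        rw [List.getLast_eq_getElem]
      have h6 : p.get ⟨0, by omega⟩ = p.head hne := by
        simp only [List.get_eq_getElem]
        rw [List.head_eq_getElem_zero]
      rw [h5, h6, ← hcl]
    · have h2 : (n + 1) % L = n % L + 1 := by
        have h7 : n + 1 = n % L + 1 + L * (n / L) := by omega
        rw [h7, Nat.add_mul_mod_self_left, Nat.mod_eq_of_lt (by omega)]
      have h3 : c (n + 1) = p.get ⟨n % L + 1, by omega⟩ := by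
        simp only [hcdef]; congr 1; exact Fin.ext h2
      rw [h3]
      simp only [hcdef]
      exact List.isChain_iff_getElem.mp hpath (n % L) (by omega)
  have hmem : ∀ n, o (c n) ∈ FinPathVerts o t p := by
    intro n
    exact ⟨p.get ⟨n % L, Nat.mod_lt n hL⟩, List.get_mem _ _, Or.inl rfl⟩
  have hsurj : ∀ w ∈ FinPathVerts o t p, ∃ n, o (c n) = w := by
    rintro w ⟨e, hep, he⟩
    obtain ⟨i, hi⟩ := List.mem_iff_get.mp hep
    rcases he with he | he
    · exact ⟨i, by rw [hget i i.isLt, hi, he]⟩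
    · refine ⟨i + 1, ?_⟩
      rw [← hinf i, hget i i.isLt, hi, he]
  refine ⟨c, hinf, hsurj, hmem, ?_⟩
  intro w₁ hw₁ w₂ hw₂
  obtain ⟨n₁, hn₁⟩ := hsurj w₁ hw₁
  obtain ⟨n₂, hn₂⟩ := hsurj w₂ hw₂
  have hper : c (n₂ + L * n₁) = c n₂ := by
    simp only [hcdef]
    congr 1
    exact Fin.ext (Nat.add_mul_mod_self_left _ _ _)
  have hle : n₁ ≤ n₂ + L * n₁ := le_trans (Nat.le_mul_of_pos_left n₁ hL) (Nat.le_add_left _ _)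
  have := reach_inf o t hinf hle
  rwa [hper, hn₁, hn₂] at this

/-- The set `H = {v | E(v) satisfies (1) and (2)}` is hereditary
and saturated. -/
theorem stmt10 [Countable V] [Countable E] (o t : E → V) :
    Hereditary o t {v : V | TypeIAt o t v} ∧
    Saturated o t {v : V | TypeIAt o t v} := by
  constructor
  · -- Hereditary
    rintro v ⟨h1, h2⟩ w hvw
    exact ⟨fun p hp hsub => h1 p hp fun x hx => hvw.trans (hsub hx),
      fun l hl hsub => h2 l hl fun x hx => hvw.trans (hsub hx)⟩
  · -- Saturated
    intro v _ hsucc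
    constructor
    · -- circuits
      intro p hp hsub
      obtain ⟨c, hcinf, hcsurj, hcvert, hcreach⟩ := circuit_facts o t hp
      by_cases hv : v ∈ FinPathVerts o t p
      · obtain ⟨n, hn⟩ := hcsurj v hv
        have hH : TypeIAt o t (t (c n)) := hsucc (c n) hn
        refine hH.1 p hp fun x hx => ?_
        have h := hcreach _ (hcvert (n + 1)) x hx
        rwa [← hcinf n] at h
      · have hw0 : o (c 0) ∈ FinPathVerts o t p := hcvert 0
        rcases (hsub hw0).cases_head with heq | ⟨u, ⟨e, he, hte⟩, hr'⟩
        · exact absurd (heq ▸ hw0) hv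
        · have hH : TypeIAt o t (t e) := hsucc e he
          refine hH.1 p hp fun x hx => ?_
          have h := hcreach _ hw0 x hx
          rw [hte]
          exact hr'.trans h
    · -- infinite paths
      intro l hl hsub
      by_cases hv : v ∈ InfPathVerts o t l
      · obtain ⟨n, hn⟩ := hv
        have hH : TypeIAt o t (t (l n)) := hsucc (l n) hn
        set l' : ℕ → E := fun k => l (n + 1 + k) with hl'def
        have hl' : IsInfPath o t l' := by
          intro k
          simp only [hl'def]
          have := hl (n + 1 + k)
          rwa [show n + 1 + k + 1 = n + 1 + (k + 1) by omega] at this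
        have hfin : (ReturnVerts o t l').Finite := by
          refine hH.2 l' hl' fun x hx => ?_
          obtain ⟨m, hm⟩ := hx
          have h := reach_inf o t hl (show n + 1 ≤ n + 1 + m by omega)
          rw [hl n]
          simp only [hl'def] at hm
          rwa [hm] at h
        have hsubR : ReturnVerts o t l ⊆
            ReturnVerts o t l' ∪ ((fun i => o (l i)) '' Set.Iic n) := by
          rintro x ⟨⟨m, hm⟩, e, f, hef, he, hf, hre, hrf⟩
          by_cases hmn : m ≤ n
          · exact Or.inr ⟨m, hmn, hm⟩
          · refine Or.inl ⟨⟨m - (n + 1), ?_⟩, e, f, hef, he, hf,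
              return_to_tail o t hl (n + 1) hre, return_to_tail o t hl (n + 1) hrf⟩
            simp only [hl'def]
            rwa [show n + 1 + (m - (n + 1)) = m by omega]
        exact (hfin.union ((Set.finite_Iic n).image _)).subset hsubR
      · rcases (hsub ⟨0, rfl⟩).cases_head with heq | ⟨u, ⟨e, he, hte⟩, hr'⟩
        · exact absurd ⟨0, heq.symm⟩ hv
        · have hH : TypeIAt o t (t e) := hsucc e he
          refine hH.2 l hl fun x hx => ?_
          obtain ⟨m, hm⟩ := hx
          rw [hte]
          refine hr'.trans ?_
          rw [← hm]
          exact reach_inf o t hl (Nat.zero_le m)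

end CKGraph
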